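/- For a fixed shape ρ ⊂ (ℤ₊)^d, the generating function over d-dimensional partitions with shape exactly ρ satisfies: Σ_{π : shape(π) = ρ} ∏_{(i₁,...,i_{d+1}) ∈ Cor(π)} x^{(1)}_{i₁}···x^{(d)}_{i_d} = (∏_{i ∈ Cr(ρ)} x^{(1)}_{i₁}···x^{(d)}_{i_d}) · ∏_{i ∈ ρ} (1 − x^{(1)}_{i₁}···x^{(d)}_{i_d})^{−1}. -/

import Mathlib

open scoped BigOperators

noncomputable section

namespace HDP

variable {d : ℕ}

/-- The step `i → i + e_ℓ` in `ℤ₊^d` (coordinates are 0-based). -/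
def step (i : Fin d → ℕ) (ℓ : Fin d) : Fin d → ℕ := Function.update i ℓ (i ℓ + 1)

/-- `p` is a directed lattice path of length `n` starting at `i`:
each step goes from a point to the point plus a standard basis vector. -/
def IsPathFrom (i : Fin d → ℕ) (n : ℕ) (p : ℕ → Fin d → ℕ) : Prop :=
  p 0 = i ∧ ∀ t < n, ∃ ℓ, p (t + 1) = step (p t) ℓ

/-- The last passage time `G(i)`: the maximum, over directed lattice paths starting
at `i`, of the sum of the entries of `A` along the path. -/
def lpt (A : (Fin d → ℕ) → ℕ) (i : Fin d → ℕ) : ℕ :=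
  sSup {s | ∃ n p, IsPathFrom i n p ∧ s = ∑ t ∈ Finset.range (n + 1), A (p t)}

/-- A `d`-dimensional partition: a finitely supported function `ℤ₊^d → ℕ`
which is weakly decreasing in each coordinate. -/
def IsPartition (π : (Fin d → ℕ) → ℕ) : Prop :=
  (Function.support π).Finite ∧ ∀ i j : Fin d → ℕ, (∀ k, i k ≤ j k) → π j ≤ π i

/-- The set of corners of a `d`-dimensional partition `π` : points `(i, k)` of the
diagram of `π` (i.e. `1 ≤ k ≤ π i`) such that `(i + e ℓ, k)` is not in the diagram
for every `ℓ ∈ [d]`. -/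
def Cor (π : (Fin d → ℕ) → ℕ) : Set ((Fin d → ℕ) × ℕ) :=
  {p | 1 ≤ p.2 ∧ p.2 ≤ π p.1 ∧ ∀ ℓ, π (step p.1 ℓ) < p.2}

/-- The number of corners of `π`. -/
def cor (π : (Fin d → ℕ) → ℕ) : ℕ := Nat.card (Cor π)

/-- The corner-hook volume of `π`: the sum over corners `(i, k)` of
`i₁ + ⋯ + i_d - d + 1` (in 1-based coordinates; with our 0-based
coordinates this cohook length is `(∑ j, i j) + 1`). -/
def chvol (π : (Fin d → ℕ) → ℕ) : ℕ := ∑ᶠ p ∈ Cor π, ((∑ j, p.1 j) + 1)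

/-- A set is down-closed for the componentwise order. -/
def DownClosed (ρ : Set (Fin d → ℕ)) : Prop :=
  ∀ i j : Fin d → ℕ, (∀ k, i k ≤ j k) → j ∈ ρ → i ∈ ρ

/-- The set of top corners of a shape `ρ`. -/
def Cr (ρ : Set (Fin d → ℕ)) : Set (Fin d → ℕ) := {i ∈ ρ | ∀ ℓ, step i ℓ ∉ ρ}

end HDP

open HDP

/-- The product topology on formal power series (coefficientwise convergence). -/
instance mvPowerSeriesTopology (σ : Type*) : TopologicalSpace (MvPowerSeries σ ℚ) :=
  inferInstanceAs (TopologicalSpace ((σ →₀ ℕ) → ℚ))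


/-! ### Auxiliary topology instances and lemmas -/

section TopologyAux
variable {σ : Type*}

instance : T3Space (MvPowerSeries σ ℚ) := inferInstanceAs (T3Space ((σ →₀ ℕ) → ℚ))
instance : ContinuousAdd (MvPowerSeries σ ℚ) := inferInstanceAs (ContinuousAdd ((σ →₀ ℕ) → ℚ))
instance : IsTopologicalAddGroup (MvPowerSeries σ ℚ) :=
  inferInstanceAs (IsTopologicalAddGroup ((σ →₀ ℕ) → ℚ))

lemma continuous_coeff' (m : σ →₀ ℕ) :
    Continuous fun φ : MvPowerSeries σ ℚ => MvPowerSeries.coeff m φ := continuous_apply m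

instance : ContinuousMul (MvPowerSeries σ ℚ) := by
  classical
  constructor
  refine continuous_pi_iff.mpr ?_
  intro m
  have : (fun p : MvPowerSeries σ ℚ × MvPowerSeries σ ℚ => (p.1 * p.2) m)
      = fun p => ∑ q ∈ Finset.HasAntidiagonal.antidiagonal m,
          (MvPowerSeries.coeff q.1 p.1) * (MvPowerSeries.coeff q.2 p.2) := by
    funext p; exact MvPowerSeries.coeff_mul m p.1 p.2
  rw [this]
  exact continuous_finset_sum _ fun q _ =>
    ((continuous_coeff' q.1).comp continuous_fst).mul ((continuous_coeff' q.2).comp continuous_snd)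

instance : IsTopologicalSemiring (MvPowerSeries σ ℚ) := ⟨⟩

lemma summable_monomial {A : Type*} (e : A → (σ →₀ ℕ)) (q : A → ℚ)
    (h : ∀ m, {a | e a = m}.Finite) :
    Summable (fun a => MvPowerSeries.monomial (R := ℚ) (e a) (q a)) := by
  classical
  apply Pi.summable.mpr
  intro m
  apply summable_of_ne_finset_zero (s := (h m).toFinset)
  intro a ha
  have : e a ≠ m := by simpa using ha
  show MvPowerSeries.coeff m (MvPowerSeries.monomial (R := ℚ) (e a) (q a)) = 0
  rw [MvPowerSeries.coeff_monomial, if_neg (by exact fun hh => this hh.symm)]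

lemma hasSum_geom (E : σ →₀ ℕ) (hE : E ≠ 0) :
    HasSum (fun k : ℕ => MvPowerSeries.monomial (R := ℚ) (k • E) 1)
      ((1 - MvPowerSeries.monomial (R := ℚ) E 1)⁻¹) := by
  classical
  have hsum : Summable (fun k : ℕ => MvPowerSeries.monomial (R := ℚ) (k • E) (1:ℚ)) := by
    apply summable_monomial _ _
    intro m
    apply Set.Finite.subset (Set.finite_Iic ((m.sum fun _ v => v)))
    intro k hk
    obtain ⟨s₀, hs₀⟩ := Finsupp.ne_iff.mp hE
    have hs : E s₀ ≠ 0 := by simpa using hs₀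
    have h1 : k * E s₀ = m s₀ := by
      have := congrArg (fun f => f s₀) hk; simpa using this
    have h2 : m s₀ ≤ m.sum fun _ v => v := by
      by_cases hms : m s₀ = 0
      · simp [hms]
      · exact Finset.single_le_sum (f := fun s => m s) (fun _ _ => Nat.zero_le _)
          (Finsupp.mem_support_iff.mpr hms)
    have : k ≤ k * E s₀ := Nat.le_mul_of_pos_right k (Nat.pos_of_ne_zero hs)
    exact Set.mem_Iic.mpr (by omega)
  set x := MvPowerSeries.monomial (R := ℚ) E (1:ℚ) with hx
  set S := ∑' k : ℕ, MvPowerSeries.monomial (R := ℚ) (k • E) (1:ℚ) with hS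
  have hsS : HasSum (fun k : ℕ => MvPowerSeries.monomial (R := ℚ) (k • E) (1:ℚ)) S := hsum.hasSum
  have h0 : MvPowerSeries.monomial (R := ℚ) ((0:ℕ) • E) (1:ℚ) = 1 := by
    rw [zero_smul]; exact MvPowerSeries.monomial_zero_one
  have hshift : HasSum (fun k : ℕ => MvPowerSeries.monomial (R := ℚ) ((k+1) • E) (1:ℚ)) (S - 1) := by
    have := (hasSum_nat_add_iff'
      (f := fun k : ℕ => MvPowerSeries.monomial (R := ℚ) (k • E) (1:ℚ)) 1).mpr hsS
    simpa [h0] using this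
  have hmul : HasSum (fun k : ℕ => MvPowerSeries.monomial (R := ℚ) ((k+1) • E) (1:ℚ)) (x * S) := by
    have := hsS.mul_left x
    convert this using 2 with k
    · rfl
    rw [hx, MvPowerSeries.monomial_mul_monomial, one_mul, succ_nsmul, add_comm]
  have hxS : x * S = S - 1 := hmul.unique hshift
  have hconst : MvPowerSeries.constantCoeff (σ := σ) (R := ℚ) (1 - x) ≠ 0 := by
    rw [map_sub, map_one, hx]
    rw [show MvPowerSeries.constantCoeff (σ := σ) (R := ℚ) (MvPowerSeries.monomial (R := ℚ) E (1:ℚ))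
        = MvPowerSeries.coeff 0 (MvPowerSeries.monomial (R := ℚ) E (1:ℚ)) from rfl,
      MvPowerSeries.coeff_monomial, if_neg (by exact fun hh => hE hh.symm)]
    norm_num
  have : (1 - x)⁻¹ = S := by
    rw [MvPowerSeries.inv_eq_iff_mul_eq_one hconst]
    rw [mul_comm, sub_mul, one_mul, hxS]
    ring
  rw [this]; exact hsS

lemma coeff_bound {c : ℕ} {E m rest : σ →₀ ℕ} (hE : E ≠ 0) (h : c • E + rest = m) :
    c ≤ m.sum fun _ v => v := by
  obtain ⟨s₀, hs₀⟩ := Finsupp.ne_iff.mp hE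
  have hs : E s₀ ≠ 0 := by simpa using hs₀
  have h1 : c * E s₀ + rest s₀ = m s₀ := by
    have := congrArg (fun f => f s₀) h; simpa using this
  have h2 : m s₀ ≤ m.sum fun _ v => v := by
    by_cases hms : m s₀ = 0
    · simp [hms]
    · exact Finset.single_le_sum (f := fun s => m s) (fun _ _ => Nat.zero_le _)
        (Finsupp.mem_support_iff.mpr hms)
  have h3 : c ≤ c * E s₀ := Nat.le_mul_of_pos_right c (Nat.pos_of_ne_zero hs)
  omega

lemma finite_fiber_prod {B : Type*} [Fintype B] (E0 : σ →₀ ℕ) (hE0 : E0 ≠ 0)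
    (E : B → σ →₀ ℕ) (hE : ∀ b, E b ≠ 0) (m : σ →₀ ℕ) :
    {p : ℕ × (B → ℕ) | p.1 • E0 + ∑ b, p.2 b • E b = m}.Finite := by
  classical
  set N := m.sum fun _ v => v with hN
  apply Set.Finite.subset (Set.Finite.prod (Set.finite_Iic N)
    (Set.Finite.pi (fun _ : B => Set.finite_Iic N)))
  rintro ⟨k, c⟩ hp
  simp only [Set.mem_setOf_eq] at hp
  constructor
  · exact Set.mem_Iic.mpr (coeff_bound hE0 hp)
  · intro b _
    have : c b • E b + (k • E0 + ∑ b' ∈ Finset.univ.erase b, c b' • E b') = m := by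
      rw [← hp]
      rw [← Finset.add_sum_erase _ _ (Finset.mem_univ b)]
      exact add_left_comm _ _ _
    exact Set.mem_Iic.mpr (coeff_bound (hE b) this)

lemma hasSum_geom_prod {ι : Type*} [DecidableEq ι] (E : ι → (σ →₀ ℕ)) (s : Finset ι)
    (hE : ∀ i ∈ s, E i ≠ 0) :
    HasSum (fun c : (↥s → ℕ) => MvPowerSeries.monomial (R := ℚ) (∑ i : ↥s, c i • E i.1) 1)
      (∏ i ∈ s, (1 - MvPowerSeries.monomial (R := ℚ) (E i) 1)⁻¹) := by
  classical
  induction s using Finset.induction_on with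
  | empty =>
    rw [Finset.prod_empty]
    have h1 : ∀ c : (↥(∅ : Finset ι) → ℕ),
        MvPowerSeries.monomial (R := ℚ) (∑ i : ↥(∅ : Finset ι), c i • E i.1) (1:ℚ) = 1 := by
      intro c
      rw [show (∑ i : ↥(∅ : Finset ι), c i • E i.1) = 0 by simp]
      exact MvPowerSeries.monomial_zero_one
    have : Unique (↥(∅ : Finset ι) → ℕ) := Pi.uniqueOfIsEmpty _
    have := hasSum_single (f := fun c : (↥(∅ : Finset ι) → ℕ) =>
      MvPowerSeries.monomial (R := ℚ) (∑ i : ↥(∅ : Finset ι), c i • E i.1) (1:ℚ)) default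
      (fun b hb => absurd (Subsingleton.elim b default) hb)
    convert this using 2
    exact (h1 default).symm
  | @insert a t hat ih =>
    have hEa : E a ≠ 0 := hE a (Finset.mem_insert_self a t)
    have hEt : ∀ i ∈ t, E i ≠ 0 := fun i hi => hE i (Finset.mem_insert_of_mem hi)
    let e : (ℕ × (↥t → ℕ)) ≃ (↥(insert a t) → ℕ) :=
      { toFun := fun p i => if h : i.1 = a then p.1 else p.2 ⟨i.1, by
          rcases Finset.mem_insert.mp i.2 with h' | h'
          · exact absurd h' h
          · exact h'⟩
        invFun := fun c => (c ⟨a, Finset.mem_insert_self a t⟩,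
          fun i => c ⟨i.1, Finset.mem_insert_of_mem i.2⟩)
        left_inv := by
          rintro ⟨k, c⟩
          refine Prod.ext ?_ ?_
          · simp
          · funext i
            have hia : (i : ι) ≠ a := fun h => hat (h ▸ i.2)
            simp [hia]
        right_inv := by
          intro c
          funext i
          by_cases h : (i : ι) = a
          · simp only [dif_pos h]
            exact congrArg c (Subtype.ext h.symm)
          · simp only [dif_neg h] }
    have key : ∀ p : ℕ × (↥t → ℕ),
        (∑ i : ↥(insert a t), (e p) i • E i.1)
          = p.1 • E a + ∑ i : ↥t, p.2 i • E i.1 := by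
      rintro ⟨k, c⟩
      rw [Finset.univ_eq_attach, Finset.attach_insert,
        Finset.sum_insert (by
          intro hmem
          rcases Finset.mem_image.mp hmem with ⟨y, hy, hxy⟩
          have hya : (y : ι) = a := congrArg Subtype.val hxy
          exact hat (hya ▸ y.2)),
        Finset.sum_image (by
          intro x _ y _ hxy
          have hv := congrArg Subtype.val hxy
          exact Subtype.ext hv)]
      congr 1
      · simp [e]
      · rw [Finset.univ_eq_attach]
        apply Finset.sum_congr rfl
        intro x _
        have hxa : (x : ι) ≠ a := fun h => hat (h ▸ x.2)
        simp [e, hxa]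
    have hhs : HasSum (fun p : ℕ × (↥t → ℕ) =>
        MvPowerSeries.monomial (R := ℚ) (p.1 • E a) (1:ℚ) *
          MvPowerSeries.monomial (R := ℚ) (∑ i : ↥t, p.2 i • E i.1) (1:ℚ))
        ((1 - MvPowerSeries.monomial (R := ℚ) (E a) 1)⁻¹ *
          ∏ i ∈ t, (1 - MvPowerSeries.monomial (R := ℚ) (E i) 1)⁻¹) := by
      apply HasSum.mul (hasSum_geom (E a) hEa) (ih hEt)
      have : (fun x : ℕ × (↥t → ℕ) =>
          MvPowerSeries.monomial (R := ℚ) (x.1 • E a) (1:ℚ) *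
            MvPowerSeries.monomial (R := ℚ) (∑ i : ↥t, x.2 i • E i.1) (1:ℚ))
          = fun x => MvPowerSeries.monomial (R := ℚ) (x.1 • E a + ∑ i : ↥t, x.2 i • E i.1) ((1:ℚ)) := by
        funext x
        rw [MvPowerSeries.monomial_mul_monomial, one_mul]
      rw [this]
      exact summable_monomial _ _ (fun m => finite_fiber_prod (E a) hEa
        (fun b : ↥t => E b.1) (fun b => hEt b.1 b.2) m)
    rw [Finset.prod_insert hat]
    rw [← Equiv.hasSum_iff e]
    have : ((fun c : (↥(insert a t) → ℕ) =>
        MvPowerSeries.monomial (R := ℚ) (∑ i : ↥(insert a t), c i • E i.1) (1:ℚ)) ∘ e)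
        = fun p : ℕ × (↥t → ℕ) =>
          MvPowerSeries.monomial (R := ℚ) (p.1 • E a) (1:ℚ) *
            MvPowerSeries.monomial (R := ℚ) (∑ i : ↥t, p.2 i • E i.1) (1:ℚ) := by
      funext p
      rw [Function.comp_apply, key p, MvPowerSeries.monomial_mul_monomial, one_mul]
    rw [this]
    exact hhs

end TopologyAux

/-! ### Combinatorial auxiliary lemmas -/

namespace HDPAux
variable {d : ℕ}

lemma le_step (i : Fin d → ℕ) (ℓ : Fin d) : ∀ k, i k ≤ step i ℓ k := by
  intro k
  unfold step
  rcases eq_or_ne k ℓ with h | h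
  · subst h; rw [Function.update_self]; omega
  · rw [Function.update_of_ne h]

lemma step_sum (i : Fin d → ℕ) (ℓ : Fin d) : ∑ j, step i ℓ j = (∑ j, i j) + 1 := by
  unfold step
  rw [Finset.sum_update_of_mem (Finset.mem_univ ℓ), ← Finset.add_sum_erase _ i (Finset.mem_univ ℓ),
    Finset.erase_eq]
  omega

lemma le_of_forall_step (f : (Fin d → ℕ) → ℕ) (hf : ∀ i ℓ, f (step i ℓ) ≤ f i) :
    ∀ i j : Fin d → ℕ, (∀ k, i k ≤ j k) → f j ≤ f i := by
  suffices h : ∀ (n : ℕ) (i j : Fin d → ℕ), (∀ k, i k ≤ j k) →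
      (∑ k, (j k - i k)) ≤ n → f j ≤ f i by
    intro i j hij
    exact h (∑ k, (j k - i k)) i j hij le_rfl
  intro n
  induction n with
  | zero =>
    intro i j hij hs
    have : i = j := by
      funext k
      have h1 : j k - i k = 0 :=
        Finset.sum_eq_zero_iff.mp (Nat.le_zero.mp hs) k (Finset.mem_univ k)
      have := hij k
      omega
    rw [this]
  | succ n ih =>
    intro i j hij hs
    by_cases hji : ∀ k, j k ≤ i k
    · have : j = i := funext fun k => Nat.le_antisymm (hji k) (hij k)
      rw [this]
    · push_neg at hji
      obtain ⟨ℓ, hℓ⟩ := hji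
      have hstep : ∀ k, step i ℓ k ≤ j k := by
        intro k
        unfold step
        rcases eq_or_ne k ℓ with h | h
        · subst h; rw [Function.update_self]; omega
        · rw [Function.update_of_ne h]; exact hij k
      have hmeas : (∑ k, (j k - step i ℓ k)) ≤ n := by
        have hfun : (fun k => j k - step i ℓ k)
            = Function.update (fun k => j k - i k) ℓ (j ℓ - (i ℓ + 1)) := by
          funext k
          rcases eq_or_ne k ℓ with h | h
          · subst h; rw [Function.update_self]; unfold step; rw [Function.update_self]
          · rw [Function.update_of_ne h]; unfold step; rw [Function.update_of_ne h]
        have h1 : ∑ k, (j k - step i ℓ k) = (j ℓ - (i ℓ + 1)) +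
            ∑ k ∈ Finset.univ \ {ℓ}, (j k - i k) := by
          rw [hfun, Finset.sum_update_of_mem (Finset.mem_univ ℓ)]
        have h2 : ∑ k, (j k - i k) = (j ℓ - i ℓ) + ∑ k ∈ Finset.univ \ {ℓ}, (j k - i k) := by
          rw [← Finset.add_sum_erase _ _ (Finset.mem_univ ℓ), Finset.erase_eq]
        omega
      exact le_trans (ih (step i ℓ) j hstep hmeas) (hf i ℓ)

variable (ρ : Set (Fin d → ℕ))

open Classical in
/-- iterated construction of the partition from corner data `c` -/
def gg (c : (Fin d → ℕ) → ℕ) : ℕ → (Fin d → ℕ) → ℕ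
  | 0 => fun _ => 0
  | n+1 => fun i => if i ∈ ρ then
      (c i + (if ∀ ℓ, step i ℓ ∉ ρ then 1 else 0)) + Finset.univ.sup (fun ℓ => gg c n (step i ℓ))
    else 0

/-- the partition associated to corner data `c` -/
def build (B : ℕ) (c : (Fin d → ℕ) → ℕ) (i : Fin d → ℕ) : ℕ :=
  gg ρ c (B + 1 - ∑ j, i j) i

open Classical in
/-- the corner data associated to a partition -/
def recover (π : (Fin d → ℕ) → ℕ) (i : Fin d → ℕ) : ℕ :=
  if i ∈ ρ then
    π i - Finset.univ.sup (fun ℓ => π (step i ℓ)) - (if ∀ ℓ, step i ℓ ∉ ρ then 1 else 0)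
  else 0

variable {ρ}

lemma build_not_mem {B c} {i : Fin d → ℕ} (hi : i ∉ ρ) : build ρ B c i = 0 := by
  unfold build
  cases h : B + 1 - ∑ j, i j with
  | zero => rfl
  | succ n => simp only [gg, if_neg hi]

open Classical in
lemma build_mem {B c} {i : Fin d → ℕ} (hB : ∀ i ∈ ρ, ∑ j, i j ≤ B) (hi : i ∈ ρ) :
    build ρ B c i = (c i + (if ∀ ℓ, step i ℓ ∉ ρ then 1 else 0))
      + Finset.univ.sup (fun ℓ => build ρ B c (step i ℓ)) := by
  have hsB : ∑ j, i j ≤ B := hB i hi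
  have h1 : B + 1 - ∑ j, i j = (B - ∑ j, i j) + 1 := by omega
  unfold build
  rw [h1]
  simp only [gg, if_pos hi]
  congr 1
  apply Finset.sup_congr rfl
  intro ℓ _
  rw [step_sum, Nat.succ_sub_succ]

lemma build_step_le {B c} (hB : ∀ i ∈ ρ, ∑ j, i j ≤ B) (hdown : DownClosed ρ)
    (i : Fin d → ℕ) (ℓ : Fin d) : build ρ B c (step i ℓ) ≤ build ρ B c i := by
  by_cases hi : i ∈ ρ
  · rw [build_mem hB hi]
    exact le_trans (Finset.le_sup (f := fun ℓ' => build ρ B c (step i ℓ'))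
      (Finset.mem_univ ℓ)) (Nat.le_add_left _ _)
  · have hstep : step i ℓ ∉ ρ := fun h => hi (hdown i (step i ℓ) (le_step i ℓ) h)
    rw [build_not_mem hi, build_not_mem hstep]

lemma build_pos {B c} (hB : ∀ i ∈ ρ, ∑ j, i j ≤ B) :
    ∀ (n : ℕ) (i : Fin d → ℕ), i ∈ ρ → B - ∑ j, i j ≤ n → 1 ≤ build ρ B c i := by
  intro n
  induction n with
  | zero =>
    intro i hi hn
    rw [build_mem hB hi]
    by_cases htop : ∀ ℓ, step i ℓ ∉ ρ
    · rw [if_pos htop]; omega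
    · push_neg at htop
      obtain ⟨ℓ, hℓ⟩ := htop
      exfalso
      have := hB _ hℓ
      rw [step_sum] at this
      have := hB i hi
      omega
  | succ n ih =>
    intro i hi hn
    rw [build_mem hB hi]
    by_cases htop : ∀ ℓ, step i ℓ ∉ ρ
    · rw [if_pos htop]; omega
    · push_neg at htop
      obtain ⟨ℓ, hℓ⟩ := htop
      have h1 : 1 ≤ build ρ B c (step i ℓ) := by
        apply ih _ hℓ
        rw [step_sum]
        have := hB _ hℓ
        rw [step_sum] at this
        omega
      exact le_trans (le_trans h1 (Finset.le_sup (f := fun ℓ' => build ρ B c (step i ℓ'))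
        (Finset.mem_univ ℓ))) (Nat.le_add_left _ _)

lemma build_support {B c} (hB : ∀ i ∈ ρ, ∑ j, i j ≤ B) :
    Function.support (build ρ B c) = ρ := by
  ext i
  simp only [Function.mem_support]
  constructor
  · intro h
    by_contra hi
    exact h (build_not_mem hi)
  · intro hi
    have := build_pos (c := c) hB (B - ∑ j, i j) i hi le_rfl
    omega

lemma build_isPartition {B c} (hB : ∀ i ∈ ρ, ∑ j, i j ≤ B) (hdown : DownClosed ρ)
    (hfin : ρ.Finite) : IsPartition (build ρ B c) := by
  constructor
  · rw [build_support hB]; exact hfin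
  · exact fun i j hij => le_of_forall_step _ (build_step_le hB hdown) i j hij

open Classical in
lemma recover_build {B} (hB : ∀ i ∈ ρ, ∑ j, i j ≤ B) (c : (Fin d → ℕ) → ℕ)
    {i : Fin d → ℕ} (hi : i ∈ ρ) : recover ρ (build ρ B c) i = c i := by
  unfold recover
  rw [if_pos hi, build_mem hB hi]
  omega

open Classical in
lemma build_recover {B} (hB : ∀ i ∈ ρ, ∑ j, i j ≤ B) {π : (Fin d → ℕ) → ℕ}
    (hπ : IsPartition π) (hsupp : Function.support π = ρ) :
    build ρ B (recover ρ π) = π := by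
  have hzero : ∀ i, i ∉ ρ → π i = 0 := by
    intro i hi
    by_contra h
    exact hi (hsupp ▸ Function.mem_support.mpr h)
  suffices h : ∀ (n : ℕ) (i : Fin d → ℕ), B - ∑ j, i j ≤ n →
      build ρ B (recover ρ π) i = π i by
    funext i
    exact h (B - ∑ j, i j) i le_rfl
  intro n
  induction n with
  | zero =>
    intro i hn
    by_cases hi : i ∈ ρ
    · have htop : ∀ ℓ, step i ℓ ∉ ρ := by
        intro ℓ hℓ
        have := hB _ hℓ
        rw [step_sum] at this
        have := hB i hi
        omega
      rw [build_mem hB hi]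
      have hsup : Finset.univ.sup (fun ℓ => build ρ B (recover ρ π) (step i ℓ)) = 0 := by
        apply Nat.le_zero.mp
        apply Finset.sup_le
        intro ℓ _
        rw [build_not_mem (htop ℓ)]
      have hsupπ : Finset.univ.sup (fun ℓ => π (step i ℓ)) = 0 := by
        apply Nat.le_zero.mp
        apply Finset.sup_le
        intro ℓ _
        rw [hzero _ (htop ℓ)]
      have hπpos : 1 ≤ π i := by
        have h2 : π i ≠ 0 := by
          rw [← Function.mem_support, hsupp]; exact hi
        omega
      have hrec : recover ρ π i = π i - Finset.univ.sup (fun ℓ => π (step i ℓ)) - 1 := by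
        unfold recover
        rw [if_pos hi, if_pos htop]
      rw [hsup, if_pos htop, hrec, hsupπ]
      omega
    · rw [build_not_mem hi, hzero i hi]
  | succ n ih =>
    intro i hn
    by_cases hi : i ∈ ρ
    · rw [build_mem hB hi]
      have hstepeq : ∀ ℓ, build ρ B (recover ρ π) (step i ℓ) = π (step i ℓ) := by
        intro ℓ
        by_cases hℓ : step i ℓ ∈ ρ
        · apply ih
          have := hB _ hℓ
          rw [step_sum] at this ⊢
          omega
        · rw [build_not_mem hℓ, hzero _ hℓ]
      have hsup : Finset.univ.sup (fun ℓ => build ρ B (recover ρ π) (step i ℓ))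
          = Finset.univ.sup (fun ℓ => π (step i ℓ)) :=
        Finset.sup_congr rfl (fun ℓ _ => hstepeq ℓ)
      rw [hsup]
      have hsuple : Finset.univ.sup (fun ℓ => π (step i ℓ)) ≤ π i := by
        apply Finset.sup_le
        intro ℓ _
        exact hπ.2 i (step i ℓ) (le_step i ℓ)
      by_cases htop : ∀ ℓ, step i ℓ ∉ ρ
      · have hsupπ : Finset.univ.sup (fun ℓ => π (step i ℓ)) = 0 := by
          apply Nat.le_zero.mp
          apply Finset.sup_le
          intro ℓ _
          rw [hzero _ (htop ℓ)]
        have hπpos : 1 ≤ π i := by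
          have h2 : π i ≠ 0 := by
            rw [← Function.mem_support, hsupp]; exact hi
          omega
        have hrec : recover ρ π i = π i - Finset.univ.sup (fun ℓ => π (step i ℓ)) - 1 := by
          unfold recover
          rw [if_pos hi, if_pos htop]
        rw [if_pos htop, hrec, hsupπ]
        omega
      · have hrec : recover ρ π i = π i - Finset.univ.sup (fun ℓ => π (step i ℓ)) - 0 := by
          unfold recover
          rw [if_pos hi, if_neg htop]
        rw [if_neg htop, hrec]
        omega
    · rw [build_not_mem hi, hzero i hi]

/-- the maximum of `π` over the immediate successors of `i` -/
def M (π : (Fin d → ℕ) → ℕ) (i : Fin d → ℕ) : ℕ := Finset.univ.sup fun ℓ => π (step i ℓ)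

open Classical in
lemma cor_eq_coe {π : (Fin d → ℕ) → ℕ} {ρ : Set (Fin d → ℕ)}
    (hfin : ρ.Finite) (hsupp : Function.support π = ρ) :
    Cor π = ↑(hfin.toFinset.biUnion fun i =>
      (Finset.Ioc (M π i) (π i)).image fun k => (i, k)) := by
  ext ⟨i, k⟩
  simp only [Finset.coe_biUnion, Set.mem_iUnion, Finset.mem_coe, Finset.mem_image,
    Finset.mem_Ioc, Set.Finite.mem_toFinset, Cor, Set.mem_setOf_eq]
  constructor
  · rintro ⟨h1, h2, h3⟩
    refine ⟨i, ?_, ⟨k, ⟨?_, h2⟩, rfl⟩⟩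
    · rw [← hsupp]; exact Function.mem_support.mpr (by omega)
    · exact (Finset.sup_lt_iff (by simp only [bot_eq_zero]; omega : (⊥ : ℕ) < k)).mpr fun ℓ _ => h3 ℓ
  · rintro ⟨i', hi', k', ⟨hk1, hk2⟩, heq⟩
    have h1 : i' = i := congrArg Prod.fst heq
    have h2 : k' = k := congrArg Prod.snd heq
    rw [h1, h2] at hk1 hk2
    have hM : ∀ ℓ, π (step i ℓ) ≤ M π i :=
      fun ℓ => Finset.le_sup (f := fun ℓ => π (step i ℓ)) (Finset.mem_univ ℓ)
    have hk0 : 0 < k := lt_of_le_of_lt (Nat.zero_le _) hk1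
    exact ⟨hk0, hk2, fun ℓ => lt_of_le_of_lt (hM ℓ) hk1⟩

open Classical in
lemma finprod_cor {R : Type*} [CommMonoid R] (x : (Fin d → ℕ) → R)
    {π : (Fin d → ℕ) → ℕ} {ρ : Set (Fin d → ℕ)}
    (hfin : ρ.Finite) (hsupp : Function.support π = ρ) :
    (∏ᶠ p ∈ Cor π, x p.1) = ∏ i ∈ hfin.toFinset, x i ^ (π i - M π i) := by
  rw [cor_eq_coe hfin hsupp, finprod_mem_coe_finset]
  rw [Finset.prod_biUnion (by
    intro a _ b _ hab
    apply Finset.disjoint_left.mpr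
    intro p hpa hpb
    rcases Finset.mem_image.mp hpa with ⟨k1, _, hk1⟩
    rcases Finset.mem_image.mp hpb with ⟨k2, _, hk2⟩
    exact hab ((congrArg Prod.fst hk1).trans (congrArg Prod.fst hk2).symm))]
  apply Finset.prod_congr rfl
  intro i _
  rw [Finset.prod_image (by
    intro a _ b _ hab
    exact congrArg Prod.snd hab)]
  rw [show (∏ k ∈ Finset.Ioc (M π i) (π i), x ((i, k)).1) =
      ∏ k ∈ Finset.Ioc (M π i) (π i), x i from rfl]
  rw [Finset.prod_const, Nat.card_Ioc]


lemma finite_fiber_pi {σ B : Type*} [Fintype B] (E : B → σ →₀ ℕ) (hE : ∀ b, E b ≠ 0)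
    (m : σ →₀ ℕ) : {c : B → ℕ | ∑ b, c b • E b = m}.Finite := by
  classical
  set N := m.sum fun _ v => v with hN
  apply Set.Finite.subset (Set.Finite.pi (fun _ : B => Set.finite_Iic N))
  intro c hc
  intro b _
  simp only [Set.mem_setOf_eq] at hc
  have : c b • E b + (∑ b' ∈ Finset.univ.erase b, c b' • E b') = m := by
    rw [← hc, ← Finset.add_sum_erase _ _ (Finset.mem_univ b)]
  exact Set.mem_Iic.mpr (coeff_bound (hE b) this)

/-- the exponent of the monomial attached to a cell -/
def expv (i : Fin d → ℕ) : (Fin d × ℕ) →₀ ℕ := ∑ j, Finsupp.single (j, i j) 1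

lemma prod_monomial {α : Type*} (t : Finset α) (f : α → ((Fin d × ℕ) →₀ ℕ)) :
    (∏ a ∈ t, (MvPowerSeries.monomial (R := ℚ) (f a) 1)) = MvPowerSeries.monomial (R := ℚ) (∑ a ∈ t, f a) 1 := by
  classical
  induction t using Finset.induction_on with
  | empty => simp only [Finset.prod_empty, Finset.sum_empty]; exact MvPowerSeries.monomial_zero_one.symm
  | @insert a t hat ih =>
    rw [Finset.prod_insert hat, Finset.sum_insert hat, ih,
      MvPowerSeries.monomial_mul_monomial, one_mul]

lemma xmon_eq (i : Fin d → ℕ) :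
    (∏ j : Fin d, MvPowerSeries.X (j, i j) : MvPowerSeries (Fin d × ℕ) ℚ)
      = MvPowerSeries.monomial (R := ℚ) (expv i) 1 := by
  rw [show expv i = ∑ j, Finsupp.single (j, i j) 1 from rfl, ← prod_monomial]
  exact Finset.prod_congr rfl fun j _ => MvPowerSeries.X_def (j, i j)

lemma xmon_pow (i : Fin d → ℕ) (k : ℕ) :
    (∏ j : Fin d, MvPowerSeries.X (j, i j) : MvPowerSeries (Fin d × ℕ) ℚ) ^ k
      = MvPowerSeries.monomial (R := ℚ) (k • expv i) 1 := by
  rw [xmon_eq]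
  induction k with
  | zero => rw [pow_zero, zero_smul]; exact MvPowerSeries.monomial_zero_one.symm
  | succ k ih =>
    rw [pow_succ, ih, MvPowerSeries.monomial_mul_monomial, one_mul, succ_nsmul]

lemma expv_ne_zero (hd : 0 < d) (i : Fin d → ℕ) : expv i ≠ 0 := by
  intro h
  have h1 := congrArg (fun f => f (⟨0, hd⟩, i ⟨0, hd⟩)) h
  simp only [expv, Finsupp.coe_finset_sum, Finset.sum_apply, Finsupp.coe_zero,
    Pi.zero_apply] at h1
  have h2 := Finset.sum_eq_zero_iff.mp h1 ⟨0, hd⟩ (Finset.mem_univ _)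
  simp [Finsupp.single_apply] at h2

end HDPAux

open HDPAux

open MvPowerSeries in
/-- Multivariate corner generating function over `d`-dimensional partitions with
shape exactly `ρ`. -/
theorem corner_generating_function_shape_eq {d : ℕ} (ρ : Set (Fin d → ℕ))
    (hfin : ρ.Finite) (hdown : DownClosed ρ) :
    ∑' π : {π : (Fin d → ℕ) → ℕ // IsPartition π ∧ Function.support π = ρ},
        ∏ᶠ p ∈ Cor π.1, ∏ j : Fin d, (X (j, p.1 j) : MvPowerSeries (Fin d × ℕ) ℚ)
      = (∏ᶠ i ∈ Cr ρ, ∏ j : Fin d, (X (j, i j) : MvPowerSeries (Fin d × ℕ) ℚ)) *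
        ∏ i ∈ hfin.toFinset, (1 - ∏ j : Fin d, (X (j, i j) : MvPowerSeries (Fin d × ℕ) ℚ))⁻¹ := by
  classical
  rcases Nat.eq_zero_or_pos d with hd0 | hdpos
  · -- degenerate dimension `d = 0`
    subst hd0
    haveI hsub : Subsingleton (Fin 0 → ℕ) := ⟨fun a b => funext fun j => j.elim0⟩
    have hx1 : ∀ i : Fin 0 → ℕ,
        (∏ j : Fin 0, (X (j, i j) : MvPowerSeries (Fin 0 × ℕ) ℚ)) = 1 := by
      intro i; simp
    rcases Set.eq_empty_or_nonempty ρ with hρ | hρ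
    · subst hρ
      have hCr : Cr (∅ : Set (Fin 0 → ℕ)) = ∅ := by
        ext i; simp [Cr]
      have hfs : hfin.toFinset = ∅ := Set.Finite.toFinset_eq_empty.mpr rfl
      rw [hCr, finprod_mem_empty, hfs, Finset.prod_empty, one_mul]
      have hzero : IsPartition (fun _ : Fin 0 → ℕ => 0) ∧
          Function.support (fun _ : Fin 0 → ℕ => 0) = (∅ : Set (Fin 0 → ℕ)) := by
        refine ⟨⟨?_, ?_⟩, ?_⟩
        · simp [Function.support]
        · intro i j _; exact le_rfl
        · simp [Function.support]
      rw [tsum_eq_single (⟨fun _ => 0, hzero⟩ :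
          {π : (Fin 0 → ℕ) → ℕ // IsPartition π ∧ Function.support π = (∅ : Set (Fin 0 → ℕ))})
        (by
          rintro ⟨π, hπ, hsupp⟩ hne
          exfalso
          apply hne
          apply Subtype.ext
          funext i
          have : π i = 0 := by
            by_contra h
            have : i ∈ Function.support π := Function.mem_support.mpr h
            rw [hsupp] at this
            exact this
          simp [this])]
      have hCor : Cor (fun _ : Fin 0 → ℕ => 0) = ∅ := by
        ext p
        simp only [Cor, Set.mem_setOf_eq, Set.mem_empty_iff_false, iff_false, not_and]
        intro h1 h2
        omega
      rw [hCor, finprod_mem_empty]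
    · -- `ρ` nonempty, `d = 0`: both sides are `0`
      obtain ⟨i0, hi0⟩ := hρ
      have hρuniv : ρ = Set.univ := by
        ext y
        simp only [Set.mem_univ, iff_true]
        rwa [Subsingleton.elim y i0]
      have hrhs : (∏ i ∈ hfin.toFinset,
          (1 - ∏ j : Fin 0, (X (j, i j) : MvPowerSeries (Fin 0 × ℕ) ℚ))⁻¹) = 0 := by
        apply Finset.prod_eq_zero (hfin.mem_toFinset.mpr hi0)
        rw [hx1 i0, sub_self, MvPowerSeries.zero_inv]
      rw [hrhs, mul_zero]
      apply tsum_eq_zero_of_not_summable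
      intro hS
      set T := {π : (Fin 0 → ℕ) → ℕ // IsPartition π ∧ Function.support π = ρ} with hT
      have hconst : ∀ π : T,
          (∏ᶠ p ∈ Cor π.1, ∏ j : Fin 0, (X (j, p.1 j) : MvPowerSeries (Fin 0 × ℕ) ℚ)) = 1 := by
        intro π
        have : ∀ p : (Fin 0 → ℕ) × ℕ,
            (∏ j : Fin 0, (X (j, p.1 j) : MvPowerSeries (Fin 0 × ℕ) ℚ)) = 1 :=
          fun p => hx1 p.1
        calc (∏ᶠ p ∈ Cor π.1, ∏ j : Fin 0, (X (j, p.1 j) : MvPowerSeries (Fin 0 × ℕ) ℚ))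
            = ∏ᶠ p ∈ Cor π.1, (1 : MvPowerSeries (Fin 0 × ℕ) ℚ) := by
              apply finprod_mem_congr rfl
              intro p _
              exact this p
          _ = 1 := by simp
      have hinj : Function.Injective (fun n : ℕ => (⟨fun _ => n + 1, by
          constructor
          · constructor
            · exact Set.Finite.subset (Set.finite_univ) (Set.subset_univ _)
            · intro i j _; exact le_rfl
          · rw [hρuniv]
            ext i
            simp [Function.support]⟩ : T)) := by
        intro n m hnm
        have := congrArg (fun π : T => π.1 i0) hnm
        simpa using this
      haveI : Infinite T := Infinite.of_injective _ hinj
      have h1 := hS.tendsto_cofinite_zero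
      have h2 : (fun π : T => ∏ᶠ p ∈ Cor π.1,
          ∏ j : Fin 0, (X (j, p.1 j) : MvPowerSeries (Fin 0 × ℕ) ℚ))
          = fun _ : T => (1 : MvPowerSeries (Fin 0 × ℕ) ℚ) := funext hconst
      rw [h2] at h1
      have h3 : (1 : MvPowerSeries (Fin 0 × ℕ) ℚ) = 0 :=
        tendsto_nhds_unique tendsto_const_nhds h1
      exact one_ne_zero h3
  · -- main case `d ≥ 1`
    set s := hfin.toFinset with hs
    set B := s.sup (fun i => ∑ j, i j) with hBdef
    have hBbound : ∀ i ∈ ρ, ∑ j, i j ≤ B :=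
      fun i hi => Finset.le_sup (f := fun i => ∑ j, i j) (hfin.mem_toFinset.mpr hi)
    set ext : (↥s → ℕ) → ((Fin d → ℕ) → ℕ) :=
      fun c i => if h : i ∈ s then c ⟨i, h⟩ else 0 with hext
    have hmem : ∀ i : ↥s, (i : Fin d → ℕ) ∈ ρ := fun i => hfin.mem_toFinset.mp i.2
    let e : (↥s → ℕ) ≃ {π : (Fin d → ℕ) → ℕ // IsPartition π ∧ Function.support π = ρ} :=
      { toFun := fun c => ⟨build ρ B (ext c),
          build_isPartition hBbound hdown hfin, build_support hBbound⟩
        invFun := fun π i => recover ρ π.1 i.1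
        left_inv := by
          intro c
          funext i
          show recover ρ (build ρ B (ext c)) i.1 = c i
          rw [recover_build hBbound _ (hmem i)]
          simp only [hext, dif_pos i.2]
        right_inv := by
          rintro ⟨π, hπ, hsupp⟩
          apply Subtype.ext
          show build ρ B (ext fun i => recover ρ π i.1) = π
          have hrecext : (ext fun i => recover ρ π i.1) = recover ρ π := by
            funext i
            by_cases h : i ∈ s
            · simp only [hext, dif_pos h]
            · have hiρ : i ∉ ρ := fun hh => h (hfin.mem_toFinset.mpr hh)
              simp only [hext, dif_neg h]
              unfold recover
              rw [if_neg hiρ]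
          rw [hrecext, build_recover hBbound hπ hsupp] }
    rw [← Equiv.tsum_eq e]
    have hCrP : (∏ᶠ i ∈ Cr ρ, ∏ j : Fin d, (X (j, i j) : MvPowerSeries (Fin d × ℕ) ℚ))
        = ∏ i ∈ s, (∏ j : Fin d, (X (j, i j) : MvPowerSeries (Fin d × ℕ) ℚ))
            ^ (if ∀ ℓ, step i ℓ ∉ ρ then 1 else 0) := by
      have hCr : Cr ρ = ↑(s.filter fun i => ∀ ℓ, step i ℓ ∉ ρ) := by
        ext i
        simp only [Cr, Set.mem_setOf_eq, Finset.coe_filter, hs, hfin.mem_toFinset]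
      rw [hCr, finprod_mem_coe_finset, Finset.prod_filter]
      apply Finset.prod_congr rfl
      intro i _
      split
      · rw [pow_one]
      · rw [pow_zero]
    have hsummand : ∀ c : ↥s → ℕ,
        (∏ᶠ p ∈ Cor (e c).1, ∏ j : Fin d, (X (j, p.1 j) : MvPowerSeries (Fin d × ℕ) ℚ))
        = (∏ᶠ i ∈ Cr ρ, ∏ j : Fin d, (X (j, i j) : MvPowerSeries (Fin d × ℕ) ℚ)) *
            MvPowerSeries.monomial (R := ℚ) (∑ i : ↥s, c i • expv i.1) 1 := by
      intro c
      have hπs : Function.support (e c).1 = ρ := (e c).2.2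
      rw [finprod_cor (fun i => ∏ j : Fin d, (X (j, i j) : MvPowerSeries (Fin d × ℕ) ℚ))
        hfin hπs]
      have hexp : ∀ i ∈ s, (e c).1 i - M (e c).1 i
          = (if ∀ ℓ, step i ℓ ∉ ρ then 1 else 0) + ext c i := by
        intro i hi
        have hiρ : i ∈ ρ := hfin.mem_toFinset.mp hi
        have hval : (e c).1 i = (ext c i + (if ∀ ℓ, step i ℓ ∉ ρ then 1 else 0))
            + Finset.univ.sup (fun ℓ => build ρ B (ext c) (step i ℓ)) :=
          build_mem (c := ext c) hBbound hiρ
        have hM : M (e c).1 i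
            = Finset.univ.sup (fun ℓ => build ρ B (ext c) (step i ℓ)) := rfl
        rw [hval, hM, Nat.add_sub_cancel, Nat.add_comm]
      have hstep1 : (∏ i ∈ hfin.toFinset, (∏ j : Fin d,
            (X (j, i j) : MvPowerSeries (Fin d × ℕ) ℚ)) ^ ((e c).1 i - M (e c).1 i))
          = ∏ i ∈ s, ((∏ j : Fin d, (X (j, i j) : MvPowerSeries (Fin d × ℕ) ℚ))
              ^ (if ∀ ℓ, step i ℓ ∉ ρ then 1 else 0)) *
            ((∏ j : Fin d, (X (j, i j) : MvPowerSeries (Fin d × ℕ) ℚ)) ^ (ext c i)) :=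
        Finset.prod_congr rfl (fun i hi => by rw [hexp i hi, pow_add])
      rw [hstep1, Finset.prod_mul_distrib]
      congr 1
      · rw [hCrP]
      · rw [← Finset.prod_attach s (fun i =>
          (∏ j : Fin d, (X (j, i j) : MvPowerSeries (Fin d × ℕ) ℚ)) ^ (ext c i))]
        have : ∀ i : ↥s, ext c i.1 = c i := fun i => by
          simp only [hext, dif_pos i.2]
        rw [Finset.prod_congr rfl (fun i _ => by rw [this i, xmon_pow])]
        rw [HDPAux.prod_monomial]
        rw [Finset.univ_eq_attach]
    rw [tsum_congr hsummand]
    have hE : ∀ i ∈ s, expv i ≠ 0 := fun i _ => expv_ne_zero hdpos i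
    have hgeo := hasSum_geom_prod (σ := Fin d × ℕ) expv s hE
    have hsummable : Summable (fun c : ↥s → ℕ =>
        MvPowerSeries.monomial (R := ℚ) (∑ i : ↥s, c i • expv i.1) (1:ℚ)) := by
      apply summable_monomial
      intro m
      exact finite_fiber_pi (fun i : ↥s => expv i.1) (fun i => expv_ne_zero hdpos i.1) m
    rw [Summable.tsum_mul_left _ hsummable, hgeo.tsum_eq]
    congr 1
    apply Finset.prod_congr rfl
    intro i _
    rw [xmon_eq]
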